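/- Let G be a graph and μ a submeasure on G (μ(∅)=0, μ({v})=1 for all vertices v, μ monotone under inclusion, and μ subadditive on unions). Let h ≥ 2 be an integer and suppose μ(V(G)) ≥ 2h. Then there exist h pairwise disjoint subsets A_1,…,A_h of V(G) with (2h)^{-1}·μ(V(G)) < μ(A_i) ≤ h^{-1}·μ(V(G)) for all i ∈ [h]. -/

import Mathlib

open SimpleGraph

/-- The chromatic number of the subgraph of `G` induced on `S`, as a natural number. -/
noncomputable def chiSet {V : Type*} (G : SimpleGraph V) (S : Set V) : ℕ :=
  (G.induce S).chromaticNumber.toNat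

/-- The chromatic number of `G`, as a natural number. -/
noncomputable def chi {V : Type*} (G : SimpleGraph V) : ℕ :=
  G.chromaticNumber.toNat

/-- `(A, B)` is an anticomplete pair: no edge of `G` joins `A` and `B`. -/
def Anticomplete {V : Type*} (G : SimpleGraph V) (A B : Set V) : Prop :=
  ∀ a ∈ A, ∀ b ∈ B, ¬ G.Adj a b

/-- `G` is `H`-free: no induced subgraph of `G` is isomorphic to `H`. -/
def FreeOf {V W : Type*} (G : SimpleGraph V) (H : SimpleGraph W) : Prop :=
  IsEmpty (H ↪g G)

/-- A submeasure on the vertex set: zero on `∅`, one on singletons, monotone, subadditive. -/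
structure IsSubmeasure {V : Type*} (μ : Set V → ℝ) : Prop where
  empty : μ ∅ = 0
  single : ∀ v : V, μ {v} = 1
  mono : ∀ ⦃X Y : Set V⦄, X ⊆ Y → μ X ≤ μ Y
  subadd : ∀ A B : Set V, μ (A ∪ B) ≤ μ A + μ B

/-- In any set of submeasure exceeding `t ≥ 0` we can find a subset with
submeasure in `(t, t+1]`, by repeatedly deleting vertices. -/
lemma shrink_aux {V : Type*} [Fintype V] {μ : Set V → ℝ} (hμ : IsSubmeasure μ)
    {t : ℝ} (ht : 0 ≤ t) :
    ∀ n (S : Set V), S.ncard = n → t < μ S → ∃ A, A ⊆ S ∧ t < μ A ∧ μ A ≤ t + 1 := by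
  intro n
  induction n using Nat.strong_induction_on with
  | _ n IH =>
    intro S hcard hS
    by_cases hv : ∃ v ∈ S, t < μ (S \ {v})
    · obtain ⟨v, hvS, hv⟩ := hv
      have hlt : (S \ {v}).ncard < n := by
        rw [← hcard]
        exact Set.ncard_diff_singleton_lt_of_mem hvS (Set.toFinite S)
      obtain ⟨A, hA, h1, h2⟩ := IH _ hlt _ rfl hv
      exact ⟨A, hA.trans Set.diff_subset, h1, h2⟩
    · push_neg at hv
      have hne : S.Nonempty := by
        rcases Set.eq_empty_or_nonempty S with h | h
        · rw [h, hμ.empty] at hS; linarith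
        · exact h
      obtain ⟨v, hvS⟩ := hne
      refine ⟨S, Set.Subset.rfl, hS, ?_⟩
      have hcover : S ⊆ (S \ {v}) ∪ {v} := by
        intro x hx
        by_cases hxv : x = v
        · exact Or.inr (by simp [hxv])
        · exact Or.inl ⟨hx, hxv⟩
      calc μ S ≤ μ ((S \ {v}) ∪ {v}) := hμ.mono hcover
        _ ≤ μ (S \ {v}) + μ {v} := hμ.subadd _ _
        _ ≤ t + 1 := by rw [hμ.single v]; linarith [hv v hvS]

/-- If `μ` is a submeasure on a finite graph `G` with `μ(V(G)) ≥ 2h`,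
`h ≥ 2`, then there are `h` pairwise disjoint sets `A₁, …, A_h` with
`(2h)⁻¹·μ(V(G)) < μ(Aᵢ) ≤ h⁻¹·μ(V(G))` for all `i`. -/
theorem stmt_7 {V : Type*} [Fintype V] (G : SimpleGraph V) (μ : Set V → ℝ)
    (hμ : IsSubmeasure μ) (h : ℕ) (hh : 2 ≤ h)
    (hbig : 2 * (h : ℝ) ≤ μ Set.univ) :
    ∃ A : Fin h → Set V, (∀ i j, i ≠ j → Disjoint (A i) (A j)) ∧
      ∀ i, μ Set.univ < 2 * (h : ℝ) * μ (A i) ∧ (h : ℝ) * μ (A i) ≤ μ Set.univ := by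
  set t : ℝ := μ Set.univ / (2 * h) with ht_def
  have hh0 : (0 : ℝ) < h := by positivity
  have h2h : (0 : ℝ) < 2 * h := by positivity
  have hμV : μ Set.univ = 2 * h * t := by rw [ht_def]; field_simp
  have ht1 : 1 ≤ t := by
    rw [ht_def, le_div_iff₀ h2h]; linarith
  have ht0 : (0 : ℝ) ≤ t := by linarith
  -- greedy construction
  have key : ∀ n, n ≤ h → ∃ A : Fin n → Set V,
      (∀ i j, i ≠ j → Disjoint (A i) (A j)) ∧
      (∀ i, t < μ (A i) ∧ μ (A i) ≤ t + 1) ∧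
      μ (⋃ i, A i) ≤ n * (t + 1) := by
    intro n
    induction n with
    | zero =>
      intro _
      refine ⟨Fin.elim0, fun i => i.elim0, fun i => i.elim0, ?_⟩
      simp [Set.iUnion_of_empty, hμ.empty]
    | succ n IH =>
      intro hn
      obtain ⟨A, hdisj, hbnd, hU⟩ := IH (le_of_lt hn)
      set U : Set V := ⋃ i, A i with hU_def
      set R : Set V := Set.univ \ U with hR_def
      have hRU : R ∪ U = Set.univ := by
        rw [hR_def]; rw [Set.diff_union_self]; simp
      have hμR : t < μ R := by
        have h1 : μ Set.univ ≤ μ R + μ U := by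
          calc μ Set.univ = μ (R ∪ U) := by rw [hRU]
            _ ≤ μ R + μ U := hμ.subadd _ _
        have hn' : (n : ℝ) + 1 ≤ h := by exact_mod_cast hn
        have : (n : ℝ) * (t + 1) ≤ n * (2 * t) := by nlinarith [Nat.cast_nonneg (α := ℝ) n]
        nlinarith
      obtain ⟨B, hBR, hB1, hB2⟩ := shrink_aux hμ ht0 R.ncard R rfl hμR
      set C : Fin (n + 1) → Set V := Fin.snoc A B with hC
      refine ⟨C, ?_, ?_, ?_⟩
      · intro i j hij
        have hBd : ∀ k : Fin n, Disjoint (A k) B := by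
          intro k
          rw [Set.disjoint_right]
          intro x hxB hxA
          exact (hBR hxB).2 (Set.mem_iUnion.2 ⟨k, hxA⟩)
        induction i using Fin.lastCases with
        | last =>
          induction j using Fin.lastCases with
          | last => exact absurd rfl hij
          | cast j => simpa [hC, Fin.snoc_castSucc, Fin.snoc_last] using (hBd j).symm
        | cast i =>
          induction j using Fin.lastCases with
          | last => simpa [hC, Fin.snoc_castSucc, Fin.snoc_last] using hBd i
          | cast j =>
            have : i ≠ j := fun e => hij (by rw [e])
            simpa [hC, Fin.snoc_castSucc] using hdisj i j this
      · intro i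
        induction i using Fin.lastCases with
        | last => simpa [hC, Fin.snoc_last] using ⟨hB1, hB2⟩
        | cast i => simpa [hC, Fin.snoc_castSucc] using hbnd i
      · have hsub : (⋃ i, C i) ⊆ U ∪ B := by
          intro x hx
          obtain ⟨i, hi⟩ := Set.mem_iUnion.1 hx
          rcases Fin.eq_castSucc_or_eq_last i with ⟨j, rfl⟩ | rfl
          · exact Or.inl (Set.mem_iUnion.2 ⟨j, by simpa [hC, Fin.snoc_castSucc] using hi⟩)
          · exact Or.inr (by simpa [hC, Fin.snoc_last] using hi)
        calc μ (⋃ i, C i) ≤ μ (U ∪ B) := hμ.mono hsub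
          _ ≤ μ U + μ B := hμ.subadd _ _
          _ ≤ (n : ℝ) * (t + 1) + (t + 1) := by linarith
          _ = ((n : ℝ) + 1) * (t + 1) := by ring
          _ = ((n + 1 : ℕ) : ℝ) * (t + 1) := by push_cast; ring
  obtain ⟨A, hdisj, hbnd, _⟩ := key h le_rfl
  refine ⟨A, hdisj, fun i => ⟨?_, ?_⟩⟩
  · have := (hbnd i).1
    rw [hμV]; nlinarith
  · have := (hbnd i).2
    rw [hμV]; nlinarith
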